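/- arXiv:1904.00029 — 3 statements merged into one kernel-verified Lean document; each statement's English description precedes it below -/
import Mathlib

section
/- For ω = 2πk/N with integer k, 1 ≤ k ≤ N-1, and t̄ = (N+1)/2, the sum over t = 1 to N of (t − t̄)·sin(ωt) equals −(N/2)·cot(ω/2). -/
open Real Finset

lemma aux_sum_csin (z : ℂ) (n : ℕ) :
    (z - 1) ^ 2 * ∑ t ∈ Finset.Icc 1 n, (t : ℂ) * z ^ t
      = z - ((n : ℂ) + 1) * z ^ (n + 1) + (n : ℂ) * z ^ (n + 2) := by
  induction n with
  | zero => simp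
  | succ n ih =>
      rw [Finset.sum_Icc_succ_top (by omega), mul_add, ih]
      push_cast
      ring

lemma aux_geom_csin (z : ℂ) (n : ℕ) :
    (z - 1) * ∑ t ∈ Finset.Icc 1 n, z ^ t = z ^ (n + 1) - z := by
  induction n with
  | zero => simp
  | succ n ih =>
      rw [Finset.sum_Icc_succ_top (by omega), mul_add, ih]
      ring

theorem sum_centered_time_sin (N : ℕ) (hN : 0 < N) (k : ℤ)
    (hk1 : 1 ≤ k) (hk2 : k ≤ (N : ℤ) - 1) :
    ∑ t ∈ Finset.Icc 1 N,
        ((t : ℝ) - ((N : ℝ) + 1) / 2) *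
          Real.sin ((2 * Real.pi * (k : ℝ) / (N : ℝ)) * (t : ℝ))
      = -((N : ℝ) / 2) * Real.cot ((2 * Real.pi * (k : ℝ) / (N : ℝ)) / 2) := by
  set ω : ℝ := 2 * Real.pi * (k : ℝ) / N with hωdef
  set u : ℝ := -((N : ℝ) / 2) * Real.cot (ω / 2) with hudef
  have hNR : (0:ℝ) < N := by exact_mod_cast hN
  have hN0 : (N:ℝ) ≠ 0 := ne_of_gt hNR
  have hN0' : (N:ℂ) ≠ 0 := by exact_mod_cast hN0
  have hk1R : (1:ℝ) ≤ (k:ℝ) := by exact_mod_cast hk1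
  have hk2R : (k:ℝ) ≤ (N:ℝ) - 1 := by exact_mod_cast hk2
  have h0 : 0 < ω / 2 := by
    rw [hωdef]
    have : (0:ℝ) < 2 * Real.pi * k := by nlinarith [Real.pi_pos]
    positivity
  have hπ : ω / 2 < Real.pi := by
    rw [hωdef, div_div, div_lt_iff₀ (by positivity)]
    nlinarith [Real.pi_pos]
  have hs : 0 < Real.sin (ω/2) := Real.sin_pos_of_pos_of_lt_pi h0 hπ
  have hs0 : Real.sin (ω/2) ≠ 0 := ne_of_gt hs
  have hu : u * Real.sin (ω/2) = -((N : ℝ)/2) * Real.cos (ω/2) := by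
    rw [hudef, Real.cot_eq_cos_div_sin]
    field_simp
  set z : ℂ := Complex.exp (ω * Complex.I) with hzdef
  have hzexp : z = (Real.cos ω : ℂ) + (Real.sin ω : ℂ) * Complex.I := by
    rw [hzdef, Complex.exp_mul_I, Complex.ofReal_cos, Complex.ofReal_sin]
  have hzN : z ^ N = 1 := by
    rw [hzdef, ← Complex.exp_nat_mul]
    rw [show ((N:ℂ) * ((ω:ℂ) * Complex.I)) = (k:ℂ) * (2 * (Real.pi:ℂ) * Complex.I) by
      rw [hωdef]; push_cast; field_simp]
    exact_mod_cast Complex.exp_int_mul_two_pi_mul_I k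
  have hz1 : z ≠ 1 := by
    rw [hzdef]
    intro h1
    rw [Complex.exp_eq_one_iff] at h1
    obtain ⟨n, hn⟩ := h1
    have hn2 : (ω:ℂ) * Complex.I = (((n:ℝ) * (2 * Real.pi) : ℝ) : ℂ) * Complex.I := by
      rw [hn]; push_cast; ring
    have hωr : ω = (n:ℝ) * (2 * Real.pi) := by
      have := mul_right_cancel₀ Complex.I_ne_zero hn2
      exact_mod_cast this
    rw [hωdef] at hωr
    have h5 : 2 * Real.pi * (k:ℝ) = 2 * Real.pi * ((n:ℝ) * N) := by
      rw [div_eq_iff hN0] at hωr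
      linarith [hωr]
    have hkn : (k:ℝ) = (n:ℝ) * N :=
      mul_left_cancel₀ (by positivity : (2 * Real.pi) ≠ 0) h5
    have hknZ : k = n * N := by exact_mod_cast hkn
    have hNZ : (1:ℤ) ≤ (N:ℤ) := by exact_mod_cast hN
    rcases le_or_gt n 0 with h | h
    · nlinarith
    · nlinarith
  have hcos : Real.cos ω = 2 * Real.cos (ω/2)^2 - 1 := by
    have := Real.cos_two_mul (ω/2)
    rwa [show 2 * (ω/2) = ω by ring] at this
  have hsin : Real.sin ω = 2 * Real.sin (ω/2) * Real.cos (ω/2) := by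
    have := Real.sin_two_mul (ω/2)
    rwa [show 2 * (ω/2) = ω by ring] at this
  have hpyth := Real.sin_sq_add_cos_sq (ω/2)
  have h1 : (Real.cos ω - 1) * ((N:ℝ)/2) - Real.sin ω * u = N * Real.cos ω := by
    rw [hcos, hsin]
    linear_combination (-2 * Real.cos (ω/2)) * hu
  have h2 : (Real.cos ω - 1) * u + Real.sin ω * ((N:ℝ)/2) = N * Real.sin ω := by
    rw [hcos, hsin]
    linear_combination (2*u) * hpyth + (-2 * Real.sin (ω/2)) * hu
  have h1c : ((Real.cos ω : ℂ) - 1) * ((N:ℂ)/2) - (Real.sin ω : ℂ) * (u:ℂ)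
      = (N:ℂ) * (Real.cos ω : ℂ) := by
    have := congrArg (Complex.ofReal) h1; push_cast at this ⊢; linear_combination this
  have h2c : ((Real.cos ω : ℂ) - 1) * (u:ℂ) + (Real.sin ω : ℂ) * ((N:ℂ)/2)
      = (N:ℂ) * (Real.sin ω : ℂ) := by
    have := congrArg (Complex.ofReal) h2; push_cast at this ⊢; linear_combination this
  have hkey : (z - 1) * ((N:ℂ)/2 + (u:ℂ) * Complex.I) = (N:ℂ) * z := by
    rw [hzexp]
    linear_combination h1c + Complex.I * h2c
      + (Real.sin ω : ℂ) * (u:ℂ) * Complex.I_sq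
  have hzsub : z - 1 ≠ 0 := sub_ne_zero.2 hz1
  have hS1 : ∑ t ∈ Finset.Icc 1 N, (t : ℂ) * z ^ t = (N:ℂ)/2 + (u:ℂ) * Complex.I := by
    have h1' := aux_sum_csin z N
    have h2' : z ^ (N+1) = z := by rw [pow_succ, hzN, one_mul]
    have h3' : z ^ (N+2) = z ^ 2 := by rw [show N+2 = N+1+1 by ring, pow_succ, h2', sq]
    rw [h2', h3'] at h1'
    have h4 : (z - 1) ^ 2 * ∑ t ∈ Finset.Icc 1 N, (t : ℂ) * z ^ t
        = (z - 1) ^ 2 * ((N:ℂ)/2 + (u:ℂ) * Complex.I) := by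
      rw [h1']; linear_combination (-(z - 1)) * hkey
    exact mul_left_cancel₀ (pow_ne_zero 2 hzsub) h4
  have hS0 : ∑ t ∈ Finset.Icc 1 N, z ^ t = 0 := by
    have h1' := aux_geom_csin z N
    rw [pow_succ, hzN, one_mul, sub_self] at h1'
    exact (mul_eq_zero.1 h1').resolve_left hzsub
  have hsum : ∑ t ∈ Finset.Icc 1 N, ((t:ℂ) - ((N:ℂ) + 1)/2) * z ^ t
      = (N:ℂ)/2 + (u:ℂ) * Complex.I := by
    have h : ∀ t ∈ Finset.Icc 1 N, ((t:ℂ) - ((N:ℂ) + 1)/2) * z ^ t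
        = (t:ℂ) * z ^ t - ((N:ℂ) + 1)/2 * z ^ t := by intro t _; ring
    rw [Finset.sum_congr rfl h, Finset.sum_sub_distrib, hS1, ← Finset.mul_sum, hS0,
      mul_zero, sub_zero]
  have him : ∀ t ∈ Finset.Icc 1 N,
      ((t : ℝ) - ((N : ℝ) + 1) / 2) * Real.sin (ω * t)
        = (((t:ℂ) - ((N:ℂ) + 1)/2) * z ^ t).im := by
    intro t _
    have hzt : z ^ t = Complex.exp ((ω * t : ℝ) * Complex.I) := by
      rw [hzdef, ← Complex.exp_nat_mul]
      push_cast; ring_nf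
    rw [show ((t:ℂ) - ((N:ℂ) + 1)/2) = (((t:ℝ) - ((N:ℝ) + 1)/2 : ℝ) : ℂ) by push_cast; ring,
      hzt]
    simp only [Complex.mul_im, Complex.ofReal_re, Complex.ofReal_im,
      Complex.exp_ofReal_mul_I_im, zero_mul, add_zero]
  calc ∑ t ∈ Finset.Icc 1 N, ((t : ℝ) - ((N : ℝ) + 1) / 2) * Real.sin (ω * t)
      = ∑ t ∈ Finset.Icc 1 N, (((t:ℂ) - ((N:ℂ) + 1)/2) * z ^ t).im :=
        Finset.sum_congr rfl him
    _ = (∑ t ∈ Finset.Icc 1 N, ((t:ℂ) - ((N:ℂ) + 1)/2) * z ^ t).im := (Complex.im_sum ..).symm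
    _ = ((N:ℂ)/2 + (u:ℂ) * Complex.I).im := by rw [hsum]
    _ = u := by simp
end

section
/- For ω = 2πk/N with integer k, 1 ≤ k ≤ N-1, and t̄ = (N+1)/2, the sum over t = 1 to N of (t − t̄)·cos(ωt) equals N/2. -/
open Real Finset

lemma aux_sum_centered (z : ℂ) (N : ℕ) :
    (1 - z) * ∑ t ∈ Finset.Icc 1 N, (t : ℂ) * z ^ t
      = (∑ t ∈ Finset.Icc 1 N, z ^ t) - (N : ℂ) * z ^ (N + 1) := by
  induction N with
  | zero => simp
  | succ n ih =>
      rw [Finset.sum_Icc_succ_top (by omega : 1 ≤ n + 1),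
          Finset.sum_Icc_succ_top (by omega : 1 ≤ n + 1), mul_add, ih]
      push_cast
      ring

theorem sum_centered_time_cos (N : ℕ) (hN : 0 < N) (k : ℤ)
    (hk1 : 1 ≤ k) (hk2 : k ≤ (N : ℤ) - 1) :
    ∑ t ∈ Finset.Icc 1 N,
        ((t : ℝ) - ((N : ℝ) + 1) / 2) *
          Real.cos ((2 * Real.pi * (k : ℝ) / (N : ℝ)) * (t : ℝ))
      = (N : ℝ) / 2 := by
  have hNr : (0:ℝ) < N := by exact_mod_cast hN
  have hNne : (N:ℝ) ≠ 0 := ne_of_gt hNr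
  set ω : ℝ := 2 * Real.pi * (k:ℝ) / N with hω
  set z : ℂ := Complex.exp (ω * Complex.I) with hz
  have hzN : z ^ N = 1 := by
    rw [hz, ← Complex.exp_nat_mul]
    have h : (N:ℂ) * ((ω:ℝ) * Complex.I) = (k:ℂ) * (2 * (Real.pi:ℂ) * Complex.I) := by
      have hNC : (N:ℂ) ≠ 0 := Nat.cast_ne_zero.mpr hN.ne'
      rw [hω]; push_cast; field_simp
    rw [h, Complex.exp_int_mul_two_pi_mul_I]
  have hz1 : z ≠ 1 := by
    intro h
    rw [hz, Complex.exp_eq_one_iff] at h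
    obtain ⟨n, hn⟩ := h
    have hn' : ((ω:ℝ):ℂ) * Complex.I = ((n:ℝ) * (2 * Real.pi) : ℝ) * Complex.I := by
      rw [hn]; push_cast; ring
    have hr : ω = (n:ℝ) * (2 * Real.pi) := by
      have := mul_right_cancel₀ Complex.I_ne_zero hn'
      exact_mod_cast this
    have hk : (k:ℝ) = (n:ℝ) * N := by
      rw [hω] at hr
      field_simp at hr
      nlinarith [Real.pi_pos]
    have hkZ : k = n * N := by exact_mod_cast hk
    have hN1 : (1:ℤ) ≤ (N:ℤ) := by exact_mod_cast hN
    rcases le_or_gt n 0 with h0 | h0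
    · nlinarith
    · have : 1 ≤ n := h0
      nlinarith
  have h1z : (1:ℂ) - z ≠ 0 := sub_ne_zero.mpr (Ne.symm hz1)
  have hgeom : ∑ i ∈ Finset.range N, z ^ i = 0 := by
    rw [geom_sum_eq hz1, hzN]; simp
  have hsum0 : ∑ t ∈ Finset.Icc 1 N, z ^ t = 0 := by
    rw [← Finset.Ico_add_one_right_eq_Icc, Finset.sum_Ico_eq_sum_range]
    calc ∑ i ∈ Finset.range N, z ^ (1 + i)
        = z * ∑ i ∈ Finset.range N, z ^ i := by
          rw [Finset.mul_sum]
          exact Finset.sum_congr rfl fun i _ => by rw [pow_add, pow_one]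
      _ = 0 := by rw [hgeom, mul_zero]
  have hkey : (1 - z) * ∑ t ∈ Finset.Icc 1 N, (t:ℂ) * z ^ t = -(N:ℂ) * z := by
    rw [aux_sum_centered, hsum0, pow_succ, hzN]
    ring
  have hg : ∑ t ∈ Finset.Icc 1 N, (t:ℂ) * z ^ t = -(N:ℂ) * z / (1 - z) := by
    rw [eq_div_iff h1z]
    linear_combination hkey
  have hab : z.re ^ 2 + z.im ^ 2 = 1 := by
    rw [hz, Complex.exp_ofReal_mul_I_re, Complex.exp_ofReal_mul_I_im]
    exact Real.cos_sq_add_sin_sq ω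
  have ha1 : z.re ≠ 1 := by
    intro h
    apply hz1
    have hb : z.im = 0 := by nlinarith
    exact Complex.ext (by simp [h]) (by simp [hb])
  have hD : ((1:ℂ) - z).re ^ 2 + ((1:ℂ) - z).im ^ 2 ≠ 0 := by
    simp only [Complex.sub_re, Complex.sub_im, Complex.one_re, Complex.one_im]
    intro h
    apply ha1
    nlinarith [sq_nonneg (1 - z.re), sq_nonneg z.im]
  have gre : (∑ t ∈ Finset.Icc 1 N, (t:ℂ) * z ^ t).re = (N:ℝ) / 2 := by
    rw [hg, Complex.div_re]
    simp only [Complex.normSq_apply, Complex.mul_re, Complex.mul_im, Complex.sub_re,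
      Complex.sub_im, Complex.one_re, Complex.one_im, Complex.neg_re, Complex.neg_im,
      Complex.natCast_re, Complex.natCast_im]
    have hD' : (1 - z.re) * (1 - z.re) + (0 - z.im) * (0 - z.im) ≠ 0 := by
      intro h; apply hD
      simp only [Complex.sub_re, Complex.sub_im, Complex.one_re, Complex.one_im]
      nlinarith
    rw [← add_div, div_eq_iff hD']
    linear_combination ((N:ℝ)/2) * hab
  have hcos : ∀ t : ℕ, Real.cos (ω * t) = (z ^ t).re := by
    intro t
    rw [hz, ← Complex.exp_nat_mul]
    have h : (t:ℂ) * ((ω:ℝ) * Complex.I) = ((ω * t : ℝ) : ℂ) * Complex.I := by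
      push_cast; ring
    rw [h, Complex.exp_ofReal_mul_I_re]
  calc ∑ t ∈ Finset.Icc 1 N,
        ((t : ℝ) - ((N : ℝ) + 1) / 2) * Real.cos (ω * t)
      = ∑ t ∈ Finset.Icc 1 N,
        (((t:ℂ) * z ^ t).re - ((N : ℝ) + 1) / 2 * (z ^ t).re) := by
        refine Finset.sum_congr rfl fun t _ => ?_
        rw [hcos t]
        simp [Complex.mul_re]
        ring
    _ = (∑ t ∈ Finset.Icc 1 N, (t:ℂ) * z ^ t).re
        - ((N : ℝ) + 1) / 2 * (∑ t ∈ Finset.Icc 1 N, z ^ t).re := by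
        rw [Finset.sum_sub_distrib, Complex.re_sum, ← Finset.mul_sum, Complex.re_sum]
    _ = (N:ℝ) / 2 := by rw [hsum0, gre]; simp
end

section
/- For ω = 2πk/N with 1 ≤ k ≤ N-1, one has the closed form Σ_{t=1}^{N} t·sin(ωt) = −(N/2)·cot(ω/2) and Σ_{t=1}^{N} t·cos(ωt) = N/2 directly (without centering), since Σ_t sin(ωt) = Σ_t cos(ωt) = 0. -/
open Real Finset

theorem sum_time_sin_cos (N : ℕ) (hN : 0 < N) (k : ℤ)
    (hk1 : 1 ≤ k) (hk2 : k ≤ (N : ℤ) - 1) :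
    (∑ t ∈ Finset.Icc 1 N,
        (t : ℝ) * Real.sin ((2 * Real.pi * (k : ℝ) / (N : ℝ)) * (t : ℝ))
      = -((N : ℝ) / 2) * Real.cot ((2 * Real.pi * (k : ℝ) / (N : ℝ)) / 2))
    ∧ (∑ t ∈ Finset.Icc 1 N,
        (t : ℝ) * Real.cos ((2 * Real.pi * (k : ℝ) / (N : ℝ)) * (t : ℝ))
      = (N : ℝ) / 2) := by
  set ω : ℝ := 2 * Real.pi * (k : ℝ) / (N : ℝ) with hω
  have hNpos : (0:ℝ) < N := by exact_mod_cast hN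
  have hNne : (N:ℝ) ≠ 0 := ne_of_gt hNpos
  have hNC : (N:ℂ) ≠ 0 := by exact_mod_cast hNne
  have hk0 : (0:ℝ) < (k:ℝ) := by exact_mod_cast hk1
  have hkN : (k:ℝ) < (N:ℝ) := by
    have : k < (N:ℤ) := by omega
    exact_mod_cast this
  have hπpos := Real.pi_pos
  have h0 : 0 < ω / 2 := by rw [hω]; positivity
  have hπ : ω / 2 < Real.pi := by
    rw [hω]
    calc 2 * Real.pi * (k:ℝ) / (N:ℝ) / 2 = Real.pi * ((k:ℝ)/(N:ℝ)) := by ring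
    _ < Real.pi * 1 := by
        apply mul_lt_mul_of_pos_left _ hπpos
        rw [div_lt_one hNpos]; exact hkN
    _ = Real.pi := by ring
  set s : ℝ := Real.sin (ω / 2) with hsdef
  set c : ℝ := Real.cos (ω / 2) with hcdef
  have hs : s ≠ 0 := ne_of_gt (Real.sin_pos_of_pos_of_lt_pi h0 hπ)
  have hsc : s ^ 2 + c ^ 2 = 1 := Real.sin_sq_add_cos_sq _
  have hcos : Real.cos ω = c ^ 2 - s ^ 2 := by
    rw [show ω = 2 * (ω / 2) by ring, Real.cos_two_mul]
    nlinarith [hsc]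
  have hsin : Real.sin ω = 2 * s * c := by
    rw [show ω = 2 * (ω / 2) by ring, Real.sin_two_mul]
  set z : ℂ := Complex.exp (ω * Complex.I) with hz
  have hzN : z ^ N = 1 := by
    rw [hz, ← Complex.exp_nat_mul]
    have : (N:ℂ) * (↑ω * Complex.I) = (k:ℤ) * (2 * ↑Real.pi * Complex.I) := by
      rw [hω]; push_cast; field_simp
    rw [this, Complex.exp_int_mul_two_pi_mul_I]
  have hz1 : z ≠ 1 := by
    intro h
    rw [hz, Complex.exp_eq_one_iff] at h
    obtain ⟨n, hn⟩ := h
    have hn' : (ω : ℂ) * Complex.I = ((n : ℝ) * (2 * Real.pi) : ℝ) * Complex.I := by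
      rw [hn]; push_cast; ring
    have hω' : ω = (n:ℝ) * (2 * Real.pi) :=
      Complex.ofReal_inj.mp (mul_right_cancel₀ Complex.I_ne_zero hn')
    rw [hω, div_eq_iff hNne] at hω'
    have h2π : (2 * Real.pi) ≠ 0 := by positivity
    have hkn : (k:ℝ) = (n:ℝ) * N := by
      apply mul_left_cancel₀ h2π
      nlinarith [hω']
    have hk' : k = n * N := by exact_mod_cast hkn
    have hNZ : (0:ℤ) < (N:ℤ) := by exact_mod_cast hN
    have hn1 : 1 ≤ n := by nlinarith [hk1, hk', hNZ]
    nlinarith [hk2, hk', hn1, hNZ]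
  have hzsub : z - 1 ≠ 0 := sub_ne_zero.mpr hz1
  -- geometric sum is zero
  have hgeom : ∑ t ∈ Finset.Icc 1 N, z ^ t = 0 := by
    have hg : ∀ n : ℕ, (z - 1) * ∑ t ∈ Finset.Icc 1 n, z ^ t = z ^ (n + 1) - z := by
      intro n
      induction n with
      | zero => simp
      | succ m ih =>
        rw [Finset.sum_Icc_succ_top (by omega), mul_add, ih]
        ring
    have h1 := hg N
    rw [pow_succ, hzN, one_mul, sub_self] at h1
    exact (mul_eq_zero.mp h1).resolve_left hzsub
  -- key weighted-sum identity
  have hkey : ∀ n : ℕ, (z - 1) * ∑ t ∈ Finset.Icc 1 n, (t:ℂ) * z ^ t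
      = (n:ℂ) * z ^ (n + 1) - ∑ t ∈ Finset.Icc 1 n, z ^ t := by
    intro n
    induction n with
    | zero => simp
    | succ m ih =>
      rw [Finset.sum_Icc_succ_top (by omega), Finset.sum_Icc_succ_top (by omega),
        mul_add, ih]
      push_cast
      ring
  have hS : (z - 1) * ∑ t ∈ Finset.Icc 1 N, (t:ℂ) * z ^ t = (N:ℂ) * z := by
    rw [hkey N, hgeom, sub_zero, pow_succ, hzN, one_mul]
  set C : ℂ := ((N:ℝ)/2 : ℝ) + (-((N:ℝ)/2) * (c / s) : ℝ) * Complex.I with hC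
  have hzC : (z - 1) * C = (N:ℂ) * z := by
    have hzval : z = ((c^2 - s^2 : ℝ) : ℂ) + ((2*s*c : ℝ) : ℂ) * Complex.I := by
      rw [hz, Complex.exp_mul_I, ← Complex.ofReal_cos, ← Complex.ofReal_sin, hcos, hsin]
    rw [hzval, hC]
    have hsC : (s:ℂ) ≠ 0 := by exact_mod_cast hs
    have hscC : (s:ℂ)^2 + (c:ℂ)^2 = 1 := by exact_mod_cast hsc
    push_cast
    field_simp
    linear_combination (-(2:ℂ)*(c:ℂ)^2*(s:ℂ))*Complex.I_sq
      + ((s:ℂ) - (c:ℂ)*Complex.I)*hscC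
  have hSC : ∑ t ∈ Finset.Icc 1 N, (t:ℂ) * z ^ t = C :=
    mul_left_cancel₀ hzsub (by rw [hS, hzC])
  have hsplit : ∑ t ∈ Finset.Icc 1 N, (t:ℂ) * z ^ t
      = ((∑ t ∈ Finset.Icc 1 N, (t : ℝ) * Real.cos (ω * (t : ℝ)) : ℝ) : ℂ)
        + ((∑ t ∈ Finset.Icc 1 N, (t : ℝ) * Real.sin (ω * (t : ℝ)) : ℝ) : ℂ) * Complex.I := by
    push_cast
    rw [Finset.sum_mul, ← Finset.sum_add_distrib]
    apply Finset.sum_congr rfl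
    intro t _
    have hzt : z ^ t = Complex.exp ((ω * t : ℝ) * Complex.I) := by
      rw [hz, ← Complex.exp_nat_mul]
      push_cast
      ring_nf
    rw [hzt, Complex.exp_mul_I, ← Complex.ofReal_cos, ← Complex.ofReal_sin]
    push_cast
    ring
  rw [hsplit, hC] at hSC
  rw [Complex.ext_iff] at hSC
  simp only [Complex.add_re, Complex.add_im, Complex.ofReal_re, Complex.ofReal_im,
    Complex.mul_re, Complex.mul_im, Complex.I_re, Complex.I_im, mul_zero, mul_one,
    zero_mul, add_zero, zero_add, sub_zero, zero_sub] at hSC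
  obtain ⟨hre, him⟩ := hSC
  refine ⟨?_, ?_⟩
  · rw [Real.cot_eq_cos_div_sin, him]
  · exact hre
end
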